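/- Let r, s ∈ 𝕀 be primitive and admissible quaternions with r𝕀 = s𝕀 (equal right ideals of the icosian ring). Then |rr̃| = |ss̃| and the corresponding coincidence site lattices coincide: L ∩ (1/|rr̃|)rLr̃ = L ∩ (1/|ss̃|)sLs̃. -/

import Mathlib

noncomputable section

open Quaternion Classical

/-- √5 as a real number. -/
def sqrt5 : ℝ := Real.sqrt 5

/-- The golden ratio τ = (1+√5)/2. -/
def gold : ℝ := (1 + sqrt5) / 2

/-- membership in K = ℚ(√5) ⊆ ℝ. -/
def inK (x : ℝ) : Prop := ∃ a b : ℚ, x = (a : ℝ) + (b : ℝ) * sqrt5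

/-- The nontrivial field automorphism of K = ℚ(√5) (√5 ↦ -√5), extended by the
identity outside K.  Since `1, √5` are linearly independent over ℚ, the rational
coordinates of an element of K are unique, so this is well defined. -/
noncomputable def conjK (x : ℝ) : ℝ :=
  if h : ∃ a b : ℚ, x = (a : ℝ) + (b : ℝ) * sqrt5 then
    (h.choose : ℝ) - (h.choose_spec.choose : ℝ) * sqrt5
  else x

/-- membership in 𝔬 = ℤ[τ], the ring of integers of ℚ(√5). -/
def inO (x : ℝ) : Prop := ∃ m n : ℤ, x = (m : ℝ) + (n : ℝ) * gold

/-- The twist map (a,b,c,d) ↦ (a',b',d',c') on quaternions. -/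
noncomputable def twist (q : ℍ[ℝ]) : ℍ[ℝ] :=
  ⟨conjK q.re, conjK q.imI, conjK q.imK, conjK q.imJ⟩

/-- reduced norm nr(q) = q q̄ (as a real number). -/
def nr (q : ℍ[ℝ]) : ℝ := (q * star q).re

/-- reduced trace tr(q) = q + q̄ (as a real number). -/
def trq (q : ℍ[ℝ]) : ℝ := (q + star q).re

/-- generators of the icosian ring. -/
def e₁ : ℍ[ℝ] := ⟨1, 0, 0, 0⟩
def e₂ : ℍ[ℝ] := ⟨0, 1, 0, 0⟩
def e₃ : ℍ[ℝ] := ⟨1/2, 1/2, 1/2, 1/2⟩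
def e₄ : ℍ[ℝ] := ⟨(1 - gold)/2, gold/2, 0, 1/2⟩

/-- membership in the icosian ring 𝕀, the 𝔬-span of the four generators. -/
def inI (q : ℍ[ℝ]) : Prop :=
  ∃ c₁ c₂ c₃ c₄ : ℝ, inO c₁ ∧ inO c₂ ∧ inO c₃ ∧ inO c₄ ∧
    q = c₁ • e₁ + c₂ • e₂ + c₃ • e₃ + c₄ • e₄

/-- generators of the copy L of the root lattice A₄. -/
def g₁ : ℍ[ℝ] := ⟨1, 0, 0, 0⟩
def g₂ : ℍ[ℝ] := ⟨-1/2, 1/2, 1/2, 1/2⟩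
def g₃ : ℍ[ℝ] := ⟨0, -1, 0, 0⟩
def g₄ : ℍ[ℝ] := ⟨0, 1/2, (gold - 1)/2, -gold/2⟩

/-- L, the ℤ-span of the four generators, as an additive subgroup of ℍ(ℝ). -/
def Lgrp : AddSubgroup ℍ[ℝ] := AddSubgroup.closure {g₁, g₂, g₃, g₄}

/-- `q` is a primitive icosian. -/
def PrimitiveIcosian (q : ℍ[ℝ]) : Prop :=
  inI q ∧ ∀ α : ℝ, inK α → inI (α • q) → inO α

/-- `q` is admissible with |q q̃| = n. -/
def Admissible (q : ℍ[ℝ]) (n : ℕ) : Prop :=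
  nr q * conjK (nr q) = (n : ℝ) ^ 2

/-- The additive map x ↦ r • (q x q̃) on ℍ(ℝ). -/
noncomputable def rotHom (q : ℍ[ℝ]) (r : ℝ) : ℍ[ℝ] →+ ℍ[ℝ] where
  toFun x := r • (q * x * twist q)
  map_zero' := by simp
  map_add' x y := by
    simp [mul_add, add_mul, smul_add]

/-- Commensurateness of two additive subgroups of ℍ(ℝ). -/
def Commensurate (A B : AddSubgroup ℍ[ℝ]) : Prop :=
  (A ⊓ B).relIndex A ≠ 0 ∧ (A ⊓ B).relIndex B ≠ 0

/-- Image of an additive subgroup under a linear isometry of ℍ(ℝ) ≅ ℝ⁴. -/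
def mapIso (R : ℍ[ℝ] ≃ₗᵢ[ℝ] ℍ[ℝ]) (A : AddSubgroup ℍ[ℝ]) : AddSubgroup ℍ[ℝ] :=
  A.map (R.toLinearEquiv.toLinearMap.toAddMonoidHom)

/-- `R` lies in SO(4,ℝ). -/
def IsRotation (R : ℍ[ℝ] ≃ₗᵢ[ℝ] ℍ[ℝ]) : Prop :=
  LinearMap.det (R.toLinearEquiv.toLinearMap) = 1


set_option maxHeartbeats 1000000

/- ===================== auxiliary development ===================== -/

/- ---------- arithmetic of ℚ(√5) ---------- -/

lemma sqrt5_sq : sqrt5 * sqrt5 = 5 := Real.mul_self_sqrt (by norm_num)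

lemma irrational_sqrt5 : Irrational sqrt5 := (by norm_num : Nat.Prime 5).irrational_sqrt

lemma rat_sqrt5_inj {a b c d : ℚ} (h : (a : ℝ) + b * sqrt5 = (c : ℝ) + d * sqrt5) :
    a = c ∧ b = d := by
  by_cases hbd : b = d
  · subst hbd
    constructor
    · exact_mod_cast add_right_cancel h
    · rfl
  · exfalso
    have hbd' : ((b : ℝ) - d) ≠ 0 := by
      intro h0
      apply hbd
      exact_mod_cast sub_eq_zero.mp h0
    have : sqrt5 = ((c - a : ℚ) : ℝ) / ((b - d : ℚ) : ℝ) := by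
      push_cast
      field_simp
      nlinarith [h]
    exact irrational_sqrt5 ⟨(c - a) / (b - d), by
      rw [this]; push_cast; ring⟩

lemma conjK_spec (a b : ℚ) : conjK ((a : ℝ) + b * sqrt5) = (a : ℝ) - b * sqrt5 := by
  unfold conjK
  have h : ∃ a' b' : ℚ, ((a : ℝ) + b * sqrt5) = (a' : ℝ) + (b' : ℝ) * sqrt5 := ⟨a, b, rfl⟩
  rw [dif_pos h]
  have hs := h.choose_spec.choose_spec
  obtain ⟨h1, h2⟩ := rat_sqrt5_inj hs
  have hA : ((h.choose : ℚ) : ℝ) = (a : ℝ) := by exact_mod_cast congrArg (fun t : ℚ => (t : ℝ)) h1.symm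
  have hB : ((h.choose_spec.choose : ℚ) : ℝ) = (b : ℝ) := by exact_mod_cast congrArg (fun t : ℚ => (t : ℝ)) h2.symm
  linear_combination hA - sqrt5 * hB

lemma inK_rat (a : ℚ) : inK (a : ℝ) := ⟨a, 0, by push_cast; ring⟩
lemma inK_zero : inK 0 := by simpa using inK_rat 0
lemma inK_one : inK 1 := by simpa using inK_rat 1

lemma conjK_rat (a : ℚ) : conjK (a : ℝ) = a := by
  have := conjK_spec a 0
  simpa using this

lemma conjK_zero : conjK 0 = 0 := by simpa using conjK_rat 0
lemma conjK_one : conjK 1 = 1 := by simpa using conjK_rat 1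

lemma inK_add {x y : ℝ} (hx : inK x) (hy : inK y) : inK (x + y) := by
  obtain ⟨a, b, rfl⟩ := hx; obtain ⟨c, d, rfl⟩ := hy
  exact ⟨a + c, b + d, by push_cast; ring⟩

lemma inK_neg {x : ℝ} (hx : inK x) : inK (-x) := by
  obtain ⟨a, b, rfl⟩ := hx
  exact ⟨-a, -b, by push_cast; ring⟩

lemma inK_sub {x y : ℝ} (hx : inK x) (hy : inK y) : inK (x - y) := by
  rw [sub_eq_add_neg]; exact inK_add hx (inK_neg hy)

lemma inK_mul {x y : ℝ} (hx : inK x) (hy : inK y) : inK (x * y) := by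
  obtain ⟨a, b, rfl⟩ := hx; obtain ⟨c, d, rfl⟩ := hy
  refine ⟨a * c + 5 * b * d, a * d + b * c, ?_⟩
  push_cast
  linear_combination ((b : ℝ) * (d : ℝ)) * sqrt5_sq

lemma inK_div2 {x : ℝ} (hx : inK x) : inK (x / 2) := by
  obtain ⟨a, b, rfl⟩ := hx
  exact ⟨a / 2, b / 2, by push_cast; ring⟩

lemma conjK_add {x y : ℝ} (hx : inK x) (hy : inK y) :
    conjK (x + y) = conjK x + conjK y := by
  obtain ⟨a, b, rfl⟩ := hx; obtain ⟨c, d, rfl⟩ := hy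
  have h : (a : ℝ) + b * sqrt5 + ((c : ℝ) + d * sqrt5) = ((a + c : ℚ) : ℝ) + ((b + d : ℚ) : ℝ) * sqrt5 := by
    push_cast; ring
  rw [h, conjK_spec, conjK_spec, conjK_spec]
  push_cast; ring

lemma conjK_neg {x : ℝ} (hx : inK x) : conjK (-x) = -conjK x := by
  obtain ⟨a, b, rfl⟩ := hx
  have h : -((a : ℝ) + b * sqrt5) = ((-a : ℚ) : ℝ) + ((-b : ℚ) : ℝ) * sqrt5 := by push_cast; ring
  rw [h, conjK_spec, conjK_spec]
  push_cast; ring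

lemma conjK_sub {x y : ℝ} (hx : inK x) (hy : inK y) :
    conjK (x - y) = conjK x - conjK y := by
  rw [sub_eq_add_neg, conjK_add hx (inK_neg hy), conjK_neg hy, sub_eq_add_neg]

lemma conjK_mul {x y : ℝ} (hx : inK x) (hy : inK y) :
    conjK (x * y) = conjK x * conjK y := by
  obtain ⟨a, b, rfl⟩ := hx; obtain ⟨c, d, rfl⟩ := hy
  have h : ((a : ℝ) + b * sqrt5) * ((c : ℝ) + d * sqrt5)
      = ((a * c + 5 * b * d : ℚ) : ℝ) + ((a * d + b * c : ℚ) : ℝ) * sqrt5 := by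
    push_cast; linear_combination ((b : ℝ) * (d : ℝ)) * sqrt5_sq
  rw [h, conjK_spec, conjK_spec, conjK_spec]
  push_cast; linear_combination (-(b : ℝ) * (d : ℝ)) * sqrt5_sq

lemma conjK_conjK {x : ℝ} (hx : inK x) : conjK (conjK x) = x := by
  obtain ⟨a, b, rfl⟩ := hx
  rw [conjK_spec]
  have h : (a : ℝ) - b * sqrt5 = (a : ℝ) + ((-b : ℚ) : ℝ) * sqrt5 := by push_cast; ring
  rw [h, conjK_spec]
  push_cast; ring

lemma conjK_eq_zero {x : ℝ} (hx : inK x) (h : conjK x = 0) : x = 0 := by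
  obtain ⟨a, b, rfl⟩ := hx
  rw [conjK_spec] at h
  have h' : (a : ℝ) + ((-b : ℚ) : ℝ) * sqrt5 = ((0 : ℚ) : ℝ) + ((0 : ℚ) : ℝ) * sqrt5 := by
    push_cast; linarith
  obtain ⟨h1, h2⟩ := rat_sqrt5_inj h'
  have hb : b = 0 := by have : -b = 0 := h2; linarith
  rw [h1, hb]; push_cast; ring

lemma gold_eq : gold = ((1/2 : ℚ) : ℝ) + ((1/2 : ℚ) : ℝ) * sqrt5 := by
  unfold gold; push_cast; ring

lemma inK_gold : inK gold := ⟨1/2, 1/2, gold_eq⟩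

lemma conjK_gold : conjK gold = 1 - gold := by
  rw [gold_eq, conjK_spec]
  push_cast
  ring

lemma goldSq : gold * gold = gold + 1 := by
  unfold gold
  linear_combination (1/4 : ℝ) * sqrt5_sq

lemma inO_inK {x : ℝ} (hx : inO x) : inK x := by
  obtain ⟨m, n, rfl⟩ := hx
  exact inK_add (inK_rat m) (inK_mul (inK_rat n) inK_gold)

lemma inO_int (m : ℤ) : inO (m : ℝ) := ⟨m, 0, by push_cast; ring⟩
lemma inO_zero : inO 0 := by simpa using inO_int 0
lemma inO_one : inO 1 := by simpa using inO_int 1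
lemma inO_gold : inO gold := ⟨0, 1, by push_cast; ring⟩

lemma inO_add {x y : ℝ} (hx : inO x) (hy : inO y) : inO (x + y) := by
  obtain ⟨m, n, rfl⟩ := hx; obtain ⟨p, q, rfl⟩ := hy
  exact ⟨m + p, n + q, by push_cast; ring⟩

lemma inO_neg {x : ℝ} (hx : inO x) : inO (-x) := by
  obtain ⟨m, n, rfl⟩ := hx
  exact ⟨-m, -n, by push_cast; ring⟩

lemma inO_sub {x y : ℝ} (hx : inO x) (hy : inO y) : inO (x - y) := by
  rw [sub_eq_add_neg]; exact inO_add hx (inO_neg hy)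

lemma inO_mul {x y : ℝ} (hx : inO x) (hy : inO y) : inO (x * y) := by
  obtain ⟨m, n, rfl⟩ := hx; obtain ⟨p, q, rfl⟩ := hy
  refine ⟨m * p + n * q, m * q + n * p + n * q, ?_⟩
  push_cast
  linear_combination ((n : ℝ) * (q : ℝ)) * goldSq

lemma conjK_inO {x : ℝ} (hx : inO x) : inO (conjK x) := by
  obtain ⟨m, n, rfl⟩ := hx
  have h : (m : ℝ) + n * gold = ((m + n/2 : ℚ) : ℝ) + ((n/2 : ℚ) : ℝ) * sqrt5 := by
    rw [gold_eq]; push_cast; ring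
  rw [h, conjK_spec]
  refine ⟨m + n, -n, ?_⟩
  rw [gold_eq]; push_cast; ring

lemma norm_int {x : ℝ} (hx : inO x) : ∃ N : ℤ, x * conjK x = (N : ℝ) := by
  obtain ⟨m, n, rfl⟩ := hx
  have h : (m : ℝ) + n * gold = ((m + n/2 : ℚ) : ℝ) + ((n/2 : ℚ) : ℝ) * sqrt5 := by
    rw [gold_eq]; push_cast; ring
  refine ⟨m * m + m * n - n * n, ?_⟩
  rw [h, conjK_spec]
  push_cast
  linear_combination (-((n : ℝ)/2)^2) * sqrt5_sq

/- ---------- quaternion components ---------- -/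

@[simp] lemma mk_re' (a b c d : ℝ) : (⟨a,b,c,d⟩ : ℍ[ℝ]).re = a := rfl
@[simp] lemma mk_imI' (a b c d : ℝ) : (⟨a,b,c,d⟩ : ℍ[ℝ]).imI = b := rfl
@[simp] lemma mk_imJ' (a b c d : ℝ) : (⟨a,b,c,d⟩ : ℍ[ℝ]).imJ = c := rfl
@[simp] lemma mk_imK' (a b c d : ℝ) : (⟨a,b,c,d⟩ : ℍ[ℝ]).imK = d := rfl

lemma re_mul' (a b : ℍ[ℝ]) : (a * b).re = a.re * b.re - a.imI * b.imI - a.imJ * b.imJ - a.imK * b.imK :=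
  Quaternion.re_mul a b
lemma imI_mul' (a b : ℍ[ℝ]) : (a * b).imI = a.re * b.imI + a.imI * b.re + a.imJ * b.imK - a.imK * b.imJ :=
  Quaternion.imI_mul a b
lemma imJ_mul' (a b : ℍ[ℝ]) : (a * b).imJ = a.re * b.imJ - a.imI * b.imK + a.imJ * b.re + a.imK * b.imI :=
  Quaternion.imJ_mul a b
lemma imK_mul' (a b : ℍ[ℝ]) : (a * b).imK = a.re * b.imK + a.imI * b.imJ - a.imJ * b.imI + a.imK * b.re :=
  Quaternion.imK_mul a b

@[simp] lemma twist_re' (q : ℍ[ℝ]) : (twist q).re = conjK q.re := rfl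
@[simp] lemma twist_imI' (q : ℍ[ℝ]) : (twist q).imI = conjK q.imI := rfl
@[simp] lemma twist_imJ' (q : ℍ[ℝ]) : (twist q).imJ = conjK q.imK := rfl
@[simp] lemma twist_imK' (q : ℍ[ℝ]) : (twist q).imK = conjK q.imJ := rfl

lemma combo_eq (c1 c2 c3 c4 : ℝ) :
    c1 • e₁ + c2 • e₂ + c3 • e₃ + c4 • e₄ =
      ⟨c1 + c3/2 + c4*(1-gold)/2, c2 + c3/2 + c4*gold/2, c3/2, c3/2 + c4/2⟩ := by
  ext <;> simp [Quaternion.re_smul] <;> simp [e₁, e₂, e₃, e₄] <;> ring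

/- ---------- icosian ring closure ---------- -/

lemma inI_add {p q : ℍ[ℝ]} (hp : inI p) (hq : inI q) : inI (p + q) := by
  obtain ⟨c1, c2, c3, c4, h1, h2, h3, h4, rfl⟩ := hp
  obtain ⟨d1, d2, d3, d4, k1, k2, k3, k4, rfl⟩ := hq
  refine ⟨c1 + d1, c2 + d2, c3 + d3, c4 + d4,
    inO_add h1 k1, inO_add h2 k2, inO_add h3 k3, inO_add h4 k4, ?_⟩
  simp only [add_smul]
  abel

lemma inI_neg {p : ℍ[ℝ]} (hp : inI p) : inI (-p) := by
  obtain ⟨c1, c2, c3, c4, h1, h2, h3, h4, rfl⟩ := hp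
  refine ⟨-c1, -c2, -c3, -c4, inO_neg h1, inO_neg h2, inO_neg h3, inO_neg h4, ?_⟩
  simp only [neg_smul]
  abel

lemma inI_zero : inI 0 := by
  refine ⟨0, 0, 0, 0, inO_zero, inO_zero, inO_zero, inO_zero, ?_⟩
  simp

lemma inI_one : inI 1 := by
  refine ⟨1, 0, 0, 0, inO_one, inO_zero, inO_zero, inO_zero, ?_⟩
  rw [combo_eq]
  ext <;> simp [Quaternion.re_one, Quaternion.imI_one, Quaternion.imJ_one, Quaternion.imK_one]

lemma inI_smulO {a : ℝ} {q : ℍ[ℝ]} (ha : inO a) (hq : inI q) : inI (a • q) := by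
  obtain ⟨c1, c2, c3, c4, h1, h2, h3, h4, rfl⟩ := hq
  refine ⟨a * c1, a * c2, a * c3, a * c4,
    inO_mul ha h1, inO_mul ha h2, inO_mul ha h3, inO_mul ha h4, ?_⟩
  simp only [smul_add, smul_smul]
lemma emul11 : inI (e₁ * e₁) := by
  refine ⟨(1 + (0)*gold : ℝ), (0 + (0)*gold : ℝ), (0 + (0)*gold : ℝ), (0 + (0)*gold : ℝ), ⟨1, 0, by push_cast; ring⟩, ⟨0, 0, by push_cast; ring⟩, ⟨0, 0, by push_cast; ring⟩, ⟨0, 0, by push_cast; ring⟩, ?_⟩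
  rw [combo_eq]
  ext
  · rw [re_mul']; simp only [e₁, e₁, mk_re', mk_imI', mk_imJ', mk_imK']; linear_combination (0 : ℝ) * goldSq
  · rw [imI_mul']; simp only [e₁, e₁, mk_re', mk_imI', mk_imJ', mk_imK']; linear_combination (0 : ℝ) * goldSq
  · rw [imJ_mul']; simp only [e₁, e₁, mk_re', mk_imI', mk_imJ', mk_imK']; linear_combination (0 : ℝ) * goldSq
  · rw [imK_mul']; simp only [e₁, e₁, mk_re', mk_imI', mk_imJ', mk_imK']; linear_combination (0 : ℝ) * goldSq

lemma emul12 : inI (e₁ * e₂) := by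
  refine ⟨(0 + (0)*gold : ℝ), (1 + (0)*gold : ℝ), (0 + (0)*gold : ℝ), (0 + (0)*gold : ℝ), ⟨0, 0, by push_cast; ring⟩, ⟨1, 0, by push_cast; ring⟩, ⟨0, 0, by push_cast; ring⟩, ⟨0, 0, by push_cast; ring⟩, ?_⟩
  rw [combo_eq]
  ext
  · rw [re_mul']; simp only [e₁, e₂, mk_re', mk_imI', mk_imJ', mk_imK']; linear_combination (0 : ℝ) * goldSq
  · rw [imI_mul']; simp only [e₁, e₂, mk_re', mk_imI', mk_imJ', mk_imK']; linear_combination (0 : ℝ) * goldSq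
  · rw [imJ_mul']; simp only [e₁, e₂, mk_re', mk_imI', mk_imJ', mk_imK']; linear_combination (0 : ℝ) * goldSq
  · rw [imK_mul']; simp only [e₁, e₂, mk_re', mk_imI', mk_imJ', mk_imK']; linear_combination (0 : ℝ) * goldSq

lemma emul13 : inI (e₁ * e₃) := by
  refine ⟨(0 + (0)*gold : ℝ), (0 + (0)*gold : ℝ), (1 + (0)*gold : ℝ), (0 + (0)*gold : ℝ), ⟨0, 0, by push_cast; ring⟩, ⟨0, 0, by push_cast; ring⟩, ⟨1, 0, by push_cast; ring⟩, ⟨0, 0, by push_cast; ring⟩, ?_⟩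
  rw [combo_eq]
  ext
  · rw [re_mul']; simp only [e₁, e₃, mk_re', mk_imI', mk_imJ', mk_imK']; linear_combination (0 : ℝ) * goldSq
  · rw [imI_mul']; simp only [e₁, e₃, mk_re', mk_imI', mk_imJ', mk_imK']; linear_combination (0 : ℝ) * goldSq
  · rw [imJ_mul']; simp only [e₁, e₃, mk_re', mk_imI', mk_imJ', mk_imK']; linear_combination (0 : ℝ) * goldSq
  · rw [imK_mul']; simp only [e₁, e₃, mk_re', mk_imI', mk_imJ', mk_imK']; linear_combination (0 : ℝ) * goldSq

lemma emul14 : inI (e₁ * e₄) := by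
  refine ⟨(0 + (0)*gold : ℝ), (0 + (0)*gold : ℝ), (0 + (0)*gold : ℝ), (1 + (0)*gold : ℝ), ⟨0, 0, by push_cast; ring⟩, ⟨0, 0, by push_cast; ring⟩, ⟨0, 0, by push_cast; ring⟩, ⟨1, 0, by push_cast; ring⟩, ?_⟩
  rw [combo_eq]
  ext
  · rw [re_mul']; simp only [e₁, e₄, mk_re', mk_imI', mk_imJ', mk_imK']; linear_combination (0 : ℝ) * goldSq
  · rw [imI_mul']; simp only [e₁, e₄, mk_re', mk_imI', mk_imJ', mk_imK']; linear_combination (0 : ℝ) * goldSq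
  · rw [imJ_mul']; simp only [e₁, e₄, mk_re', mk_imI', mk_imJ', mk_imK']; linear_combination (0 : ℝ) * goldSq
  · rw [imK_mul']; simp only [e₁, e₄, mk_re', mk_imI', mk_imJ', mk_imK']; linear_combination (0 : ℝ) * goldSq

lemma emul21 : inI (e₂ * e₁) := by
  refine ⟨(0 + (0)*gold : ℝ), (1 + (0)*gold : ℝ), (0 + (0)*gold : ℝ), (0 + (0)*gold : ℝ), ⟨0, 0, by push_cast; ring⟩, ⟨1, 0, by push_cast; ring⟩, ⟨0, 0, by push_cast; ring⟩, ⟨0, 0, by push_cast; ring⟩, ?_⟩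
  rw [combo_eq]
  ext
  · rw [re_mul']; simp only [e₂, e₁, mk_re', mk_imI', mk_imJ', mk_imK']; linear_combination (0 : ℝ) * goldSq
  · rw [imI_mul']; simp only [e₂, e₁, mk_re', mk_imI', mk_imJ', mk_imK']; linear_combination (0 : ℝ) * goldSq
  · rw [imJ_mul']; simp only [e₂, e₁, mk_re', mk_imI', mk_imJ', mk_imK']; linear_combination (0 : ℝ) * goldSq
  · rw [imK_mul']; simp only [e₂, e₁, mk_re', mk_imI', mk_imJ', mk_imK']; linear_combination (0 : ℝ) * goldSq

lemma emul22 : inI (e₂ * e₂) := by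
  refine ⟨(-1 + (0)*gold : ℝ), (0 + (0)*gold : ℝ), (0 + (0)*gold : ℝ), (0 + (0)*gold : ℝ), ⟨-1, 0, by push_cast; ring⟩, ⟨0, 0, by push_cast; ring⟩, ⟨0, 0, by push_cast; ring⟩, ⟨0, 0, by push_cast; ring⟩, ?_⟩
  rw [combo_eq]
  ext
  · rw [re_mul']; simp only [e₂, e₂, mk_re', mk_imI', mk_imJ', mk_imK']; linear_combination (0 : ℝ) * goldSq
  · rw [imI_mul']; simp only [e₂, e₂, mk_re', mk_imI', mk_imJ', mk_imK']; linear_combination (0 : ℝ) * goldSq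
  · rw [imJ_mul']; simp only [e₂, e₂, mk_re', mk_imI', mk_imJ', mk_imK']; linear_combination (0 : ℝ) * goldSq
  · rw [imK_mul']; simp only [e₂, e₂, mk_re', mk_imI', mk_imJ', mk_imK']; linear_combination (0 : ℝ) * goldSq

lemma emul23 : inI (e₂ * e₃) := by
  refine ⟨(-1 + (1)*gold : ℝ), (1 + (-1)*gold : ℝ), (-1 + (0)*gold : ℝ), (2 + (0)*gold : ℝ), ⟨-1, 1, by push_cast; ring⟩, ⟨1, -1, by push_cast; ring⟩, ⟨-1, 0, by push_cast; ring⟩, ⟨2, 0, by push_cast; ring⟩, ?_⟩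
  rw [combo_eq]
  ext
  · rw [re_mul']; simp only [e₂, e₃, mk_re', mk_imI', mk_imJ', mk_imK']; linear_combination (0 : ℝ) * goldSq
  · rw [imI_mul']; simp only [e₂, e₃, mk_re', mk_imI', mk_imJ', mk_imK']; linear_combination (0 : ℝ) * goldSq
  · rw [imJ_mul']; simp only [e₂, e₃, mk_re', mk_imI', mk_imJ', mk_imK']; linear_combination (0 : ℝ) * goldSq
  · rw [imK_mul']; simp only [e₂, e₃, mk_re', mk_imI', mk_imJ', mk_imK']; linear_combination (0 : ℝ) * goldSq

lemma emul24 : inI (e₂ * e₄) := by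
  refine ⟨(0 + (0)*gold : ℝ), (1 + (-1)*gold : ℝ), (-1 + (0)*gold : ℝ), (1 + (0)*gold : ℝ), ⟨0, 0, by push_cast; ring⟩, ⟨1, -1, by push_cast; ring⟩, ⟨-1, 0, by push_cast; ring⟩, ⟨1, 0, by push_cast; ring⟩, ?_⟩
  rw [combo_eq]
  ext
  · rw [re_mul']; simp only [e₂, e₄, mk_re', mk_imI', mk_imJ', mk_imK']; linear_combination (0 : ℝ) * goldSq
  · rw [imI_mul']; simp only [e₂, e₄, mk_re', mk_imI', mk_imJ', mk_imK']; linear_combination (0 : ℝ) * goldSq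
  · rw [imJ_mul']; simp only [e₂, e₄, mk_re', mk_imI', mk_imJ', mk_imK']; linear_combination (0 : ℝ) * goldSq
  · rw [imK_mul']; simp only [e₂, e₄, mk_re', mk_imI', mk_imJ', mk_imK']; linear_combination (0 : ℝ) * goldSq

lemma emul31 : inI (e₃ * e₁) := by
  refine ⟨(0 + (0)*gold : ℝ), (0 + (0)*gold : ℝ), (1 + (0)*gold : ℝ), (0 + (0)*gold : ℝ), ⟨0, 0, by push_cast; ring⟩, ⟨0, 0, by push_cast; ring⟩, ⟨1, 0, by push_cast; ring⟩, ⟨0, 0, by push_cast; ring⟩, ?_⟩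
  rw [combo_eq]
  ext
  · rw [re_mul']; simp only [e₃, e₁, mk_re', mk_imI', mk_imJ', mk_imK']; linear_combination (0 : ℝ) * goldSq
  · rw [imI_mul']; simp only [e₃, e₁, mk_re', mk_imI', mk_imJ', mk_imK']; linear_combination (0 : ℝ) * goldSq
  · rw [imJ_mul']; simp only [e₃, e₁, mk_re', mk_imI', mk_imJ', mk_imK']; linear_combination (0 : ℝ) * goldSq
  · rw [imK_mul']; simp only [e₃, e₁, mk_re', mk_imI', mk_imJ', mk_imK']; linear_combination (0 : ℝ) * goldSq

lemma emul32 : inI (e₃ * e₂) := by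
  refine ⟨(0 + (-1)*gold : ℝ), (0 + (1)*gold : ℝ), (1 + (0)*gold : ℝ), (-2 + (0)*gold : ℝ), ⟨0, -1, by push_cast; ring⟩, ⟨0, 1, by push_cast; ring⟩, ⟨1, 0, by push_cast; ring⟩, ⟨-2, 0, by push_cast; ring⟩, ?_⟩
  rw [combo_eq]
  ext
  · rw [re_mul']; simp only [e₃, e₂, mk_re', mk_imI', mk_imJ', mk_imK']; linear_combination (0 : ℝ) * goldSq
  · rw [imI_mul']; simp only [e₃, e₂, mk_re', mk_imI', mk_imJ', mk_imK']; linear_combination (0 : ℝ) * goldSq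
  · rw [imJ_mul']; simp only [e₃, e₂, mk_re', mk_imI', mk_imJ', mk_imK']; linear_combination (0 : ℝ) * goldSq
  · rw [imK_mul']; simp only [e₃, e₂, mk_re', mk_imI', mk_imJ', mk_imK']; linear_combination (0 : ℝ) * goldSq

lemma emul33 : inI (e₃ * e₃) := by
  refine ⟨(-1 + (0)*gold : ℝ), (0 + (0)*gold : ℝ), (1 + (0)*gold : ℝ), (0 + (0)*gold : ℝ), ⟨-1, 0, by push_cast; ring⟩, ⟨0, 0, by push_cast; ring⟩, ⟨1, 0, by push_cast; ring⟩, ⟨0, 0, by push_cast; ring⟩, ?_⟩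
  rw [combo_eq]
  ext
  · rw [re_mul']; simp only [e₃, e₃, mk_re', mk_imI', mk_imJ', mk_imK']; linear_combination (0 : ℝ) * goldSq
  · rw [imI_mul']; simp only [e₃, e₃, mk_re', mk_imI', mk_imJ', mk_imK']; linear_combination (0 : ℝ) * goldSq
  · rw [imJ_mul']; simp only [e₃, e₃, mk_re', mk_imI', mk_imJ', mk_imK']; linear_combination (0 : ℝ) * goldSq
  · rw [imK_mul']; simp only [e₃, e₃, mk_re', mk_imI', mk_imJ', mk_imK']; linear_combination (0 : ℝ) * goldSq

lemma emul34 : inI (e₃ * e₄) := by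
  refine ⟨(-1 + (0)*gold : ℝ), (1 + (0)*gold : ℝ), (0 + (0)*gold : ℝ), (1 + (-1)*gold : ℝ), ⟨-1, 0, by push_cast; ring⟩, ⟨1, 0, by push_cast; ring⟩, ⟨0, 0, by push_cast; ring⟩, ⟨1, -1, by push_cast; ring⟩, ?_⟩
  rw [combo_eq]
  ext
  · rw [re_mul']; simp only [e₃, e₄, mk_re', mk_imI', mk_imJ', mk_imK']; linear_combination (-1/2 : ℝ) * goldSq
  · rw [imI_mul']; simp only [e₃, e₄, mk_re', mk_imI', mk_imJ', mk_imK']; linear_combination (1/2 : ℝ) * goldSq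
  · rw [imJ_mul']; simp only [e₃, e₄, mk_re', mk_imI', mk_imJ', mk_imK']; linear_combination (0 : ℝ) * goldSq
  · rw [imK_mul']; simp only [e₃, e₄, mk_re', mk_imI', mk_imJ', mk_imK']; linear_combination (0 : ℝ) * goldSq

lemma emul41 : inI (e₄ * e₁) := by
  refine ⟨(0 + (0)*gold : ℝ), (0 + (0)*gold : ℝ), (0 + (0)*gold : ℝ), (1 + (0)*gold : ℝ), ⟨0, 0, by push_cast; ring⟩, ⟨0, 0, by push_cast; ring⟩, ⟨0, 0, by push_cast; ring⟩, ⟨1, 0, by push_cast; ring⟩, ?_⟩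
  rw [combo_eq]
  ext
  · rw [re_mul']; simp only [e₄, e₁, mk_re', mk_imI', mk_imJ', mk_imK']; linear_combination (0 : ℝ) * goldSq
  · rw [imI_mul']; simp only [e₄, e₁, mk_re', mk_imI', mk_imJ', mk_imK']; linear_combination (0 : ℝ) * goldSq
  · rw [imJ_mul']; simp only [e₄, e₁, mk_re', mk_imI', mk_imJ', mk_imK']; linear_combination (0 : ℝ) * goldSq
  · rw [imK_mul']; simp only [e₄, e₁, mk_re', mk_imI', mk_imJ', mk_imK']; linear_combination (0 : ℝ) * goldSq

lemma emul42 : inI (e₄ * e₂) := by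
  refine ⟨(0 + (-1)*gold : ℝ), (0 + (0)*gold : ℝ), (1 + (0)*gold : ℝ), (-1 + (0)*gold : ℝ), ⟨0, -1, by push_cast; ring⟩, ⟨0, 0, by push_cast; ring⟩, ⟨1, 0, by push_cast; ring⟩, ⟨-1, 0, by push_cast; ring⟩, ?_⟩
  rw [combo_eq]
  ext
  · rw [re_mul']; simp only [e₄, e₂, mk_re', mk_imI', mk_imJ', mk_imK']; linear_combination (0 : ℝ) * goldSq
  · rw [imI_mul']; simp only [e₄, e₂, mk_re', mk_imI', mk_imJ', mk_imK']; linear_combination (0 : ℝ) * goldSq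
  · rw [imJ_mul']; simp only [e₄, e₂, mk_re', mk_imI', mk_imJ', mk_imK']; linear_combination (0 : ℝ) * goldSq
  · rw [imK_mul']; simp only [e₄, e₂, mk_re', mk_imI', mk_imJ', mk_imK']; linear_combination (0 : ℝ) * goldSq

lemma emul43 : inI (e₄ * e₃) := by
  refine ⟨(0 + (0)*gold : ℝ), (-1 + (0)*gold : ℝ), (1 + (-1)*gold : ℝ), (0 + (1)*gold : ℝ), ⟨0, 0, by push_cast; ring⟩, ⟨-1, 0, by push_cast; ring⟩, ⟨1, -1, by push_cast; ring⟩, ⟨0, 1, by push_cast; ring⟩, ?_⟩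
  rw [combo_eq]
  ext
  · rw [re_mul']; simp only [e₄, e₃, mk_re', mk_imI', mk_imJ', mk_imK']; linear_combination (1/2 : ℝ) * goldSq
  · rw [imI_mul']; simp only [e₄, e₃, mk_re', mk_imI', mk_imJ', mk_imK']; linear_combination (-1/2 : ℝ) * goldSq
  · rw [imJ_mul']; simp only [e₄, e₃, mk_re', mk_imI', mk_imJ', mk_imK']; linear_combination (0 : ℝ) * goldSq
  · rw [imK_mul']; simp only [e₄, e₃, mk_re', mk_imI', mk_imJ', mk_imK']; linear_combination (0 : ℝ) * goldSq

lemma emul44 : inI (e₄ * e₄) := by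
  refine ⟨(-1 + (0)*gold : ℝ), (0 + (0)*gold : ℝ), (0 + (0)*gold : ℝ), (1 + (-1)*gold : ℝ), ⟨-1, 0, by push_cast; ring⟩, ⟨0, 0, by push_cast; ring⟩, ⟨0, 0, by push_cast; ring⟩, ⟨1, -1, by push_cast; ring⟩, ?_⟩
  rw [combo_eq]
  ext
  · rw [re_mul']; simp only [e₄, e₄, mk_re', mk_imI', mk_imJ', mk_imK']; linear_combination (-1/2 : ℝ) * goldSq
  · rw [imI_mul']; simp only [e₄, e₄, mk_re', mk_imI', mk_imJ', mk_imK']; linear_combination (0 : ℝ) * goldSq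
  · rw [imJ_mul']; simp only [e₄, e₄, mk_re', mk_imI', mk_imJ', mk_imK']; linear_combination (0 : ℝ) * goldSq
  · rw [imK_mul']; simp only [e₄, e₄, mk_re', mk_imI', mk_imJ', mk_imK']; linear_combination (0 : ℝ) * goldSq


lemma inI_mul {p q : ℍ[ℝ]} (hp : inI p) (hq : inI q) : inI (p * q) := by
  obtain ⟨c1, c2, c3, c4, h1, h2, h3, h4, rfl⟩ := hp
  obtain ⟨d1, d2, d3, d4, k1, k2, k3, k4, rfl⟩ := hq
  simp only [add_mul, mul_add, smul_mul_smul_comm]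
  repeat' apply inI_add
  all_goals refine inI_smulO (inO_mul (by assumption) (by assumption)) ?_
  all_goals first
    | exact emul11 | exact emul12 | exact emul13 | exact emul14
    | exact emul21 | exact emul22 | exact emul23 | exact emul24
    | exact emul31 | exact emul32 | exact emul33 | exact emul34
    | exact emul41 | exact emul42 | exact emul43 | exact emul44

/- ---------- twist ---------- -/

def Kco (q : ℍ[ℝ]) : Prop := inK q.re ∧ inK q.imI ∧ inK q.imJ ∧ inK q.imK

lemma Kco_inI {q : ℍ[ℝ]} (hq : inI q) : Kco q := by
  obtain ⟨c1, c2, c3, c4, h1, h2, h3, h4, rfl⟩ := hq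
  rw [combo_eq]
  refine ⟨?_, ?_, ?_, ?_⟩
  · simp only [mk_re']
    exact inK_add (inK_add (inO_inK h1) (inK_div2 (inO_inK h3)))
      (inK_div2 (inK_mul (inO_inK h4) (inK_sub inK_one inK_gold)))
  · simp only [mk_imI']
    exact inK_add (inK_add (inO_inK h2) (inK_div2 (inO_inK h3)))
      (inK_div2 (inK_mul (inO_inK h4) inK_gold))
  · simp only [mk_imJ']
    exact inK_div2 (inO_inK h3)
  · simp only [mk_imK']
    exact inK_add (inK_div2 (inO_inK h3)) (inK_div2 (inO_inK h4))

lemma twist_mul {p q : ℍ[ℝ]} (hp : Kco p) (hq : Kco q) :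
    twist (p * q) = twist q * twist p := by
  obtain ⟨hp1, hp2, hp3, hp4⟩ := hp
  obtain ⟨hq1, hq2, hq3, hq4⟩ := hq
  have w1 := inK_mul hp1 hq1; have w2 := inK_mul hp1 hq2; have w3 := inK_mul hp1 hq3; have w4 := inK_mul hp1 hq4
  have x1 := inK_mul hp2 hq1; have x2 := inK_mul hp2 hq2; have x3 := inK_mul hp2 hq3; have x4 := inK_mul hp2 hq4
  have y1 := inK_mul hp3 hq1; have y2 := inK_mul hp3 hq2; have y3 := inK_mul hp3 hq3; have y4 := inK_mul hp3 hq4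
  have z1 := inK_mul hp4 hq1; have z2 := inK_mul hp4 hq2; have z3 := inK_mul hp4 hq3; have z4 := inK_mul hp4 hq4
  ext <;>
    simp (config := { maxDischargeDepth := 9 }) only [twist_re', twist_imI', twist_imJ', twist_imK',
      re_mul', imI_mul', imJ_mul', imK_mul',
      conjK_sub, conjK_add, conjK_mul, conjK_neg, inK_sub, inK_add, inK_mul, inK_neg,
      hp1, hp2, hp3, hp4, hq1, hq2, hq3, hq4,
      w1, w2, w3, w4, x1, x2, x3, x4, y1, y2, y3, y4, z1, z2, z3, z4] <;>
    ring

lemma twist_add {p q : ℍ[ℝ]} (hp : Kco p) (hq : Kco q) :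
    twist (p + q) = twist p + twist q := by
  obtain ⟨hp1, hp2, hp3, hp4⟩ := hp
  obtain ⟨hq1, hq2, hq3, hq4⟩ := hq
  ext <;>
    simp only [twist_re', twist_imI', twist_imJ', twist_imK',
      Quaternion.re_add, Quaternion.imI_add, Quaternion.imJ_add, Quaternion.imK_add,
      conjK_add, hp1, hp2, hp3, hp4, hq1, hq2, hq3, hq4]

lemma twist_smul {c : ℝ} {q : ℍ[ℝ]} (hc : inK c) (hq : Kco q) :
    twist (c • q) = conjK c • twist q := by
  obtain ⟨hq1, hq2, hq3, hq4⟩ := hq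
  ext <;>
    simp only [twist_re', twist_imI', twist_imJ', twist_imK',
      Quaternion.re_smul, Quaternion.imI_smul, Quaternion.imJ_smul, Quaternion.imK_smul,
      smul_eq_mul, conjK_mul, hc, hq1, hq2, hq3, hq4]

lemma twist_twist {q : ℍ[ℝ]} (hq : Kco q) : twist (twist q) = q := by
  obtain ⟨hq1, hq2, hq3, hq4⟩ := hq
  ext <;> simp only [twist_re', twist_imI', twist_imJ', twist_imK']
  · exact conjK_conjK hq1
  · exact conjK_conjK hq2
  · exact conjK_conjK hq3
  · exact conjK_conjK hq4

lemma twist_one : twist 1 = 1 := by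
  ext <;> simp only [twist_re', twist_imI', twist_imJ', twist_imK',
    Quaternion.re_one, Quaternion.imI_one, Quaternion.imJ_one, Quaternion.imK_one,
    conjK_one, conjK_zero]

lemma conjK_half : conjK (1/2 : ℝ) = 1/2 := by
  have : ((1/2 : ℚ) : ℝ) = (1/2 : ℝ) := by norm_num
  rw [← this, conjK_rat]

lemma conjK_gold_half : conjK (gold/2) = (1 - gold)/2 := by
  have h : gold/2 = ((1/4 : ℚ) : ℝ) + ((1/4 : ℚ) : ℝ) * sqrt5 := by
    rw [gold_eq]; push_cast; ring
  rw [h, conjK_spec]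
  rw [gold_eq]; push_cast; ring

lemma conjK_one_sub_gold_half : conjK ((1 - gold)/2) = gold/2 := by
  have h : (1 - gold)/2 = ((1/4 : ℚ) : ℝ) + ((-1/4 : ℚ) : ℝ) * sqrt5 := by
    rw [gold_eq]; push_cast; ring
  rw [h, conjK_spec]
  rw [gold_eq]; push_cast; ring

lemma twist_e₁ : twist e₁ = e₁ := by
  ext <;> simp only [twist_re', twist_imI', twist_imJ', twist_imK',
    Quaternion.re_sub, Quaternion.imI_sub, Quaternion.imJ_sub, Quaternion.imK_sub] <;> simp only [e₁, 
    mk_re', mk_imI', mk_imJ', mk_imK', conjK_one, conjK_zero]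

lemma twist_e₂ : twist e₂ = e₂ := by
  ext <;> simp only [twist_re', twist_imI', twist_imJ', twist_imK',
    Quaternion.re_sub, Quaternion.imI_sub, Quaternion.imJ_sub, Quaternion.imK_sub] <;> simp only [e₂, 
    mk_re', mk_imI', mk_imJ', mk_imK', conjK_one, conjK_zero]

lemma twist_e₃ : twist e₃ = e₃ := by
  ext <;> simp only [twist_re', twist_imI', twist_imJ', twist_imK',
    Quaternion.re_sub, Quaternion.imI_sub, Quaternion.imJ_sub, Quaternion.imK_sub] <;> simp only [e₃, 
    mk_re', mk_imI', mk_imJ', mk_imK', conjK_half]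

lemma twist_e₄ : twist e₄ = e₃ - e₄ := by
  ext <;> simp only [twist_re', twist_imI', twist_imJ', twist_imK',
    Quaternion.re_sub, Quaternion.imI_sub, Quaternion.imJ_sub, Quaternion.imK_sub] <;> simp only [e₃, e₄, 
    Quaternion.re_sub, Quaternion.imI_sub, Quaternion.imJ_sub, Quaternion.imK_sub,
    mk_re', mk_imI', mk_imJ', mk_imK', conjK_half, conjK_zero,
    conjK_gold_half, conjK_one_sub_gold_half] <;> ring

lemma Kco_e₁ : Kco e₁ := ⟨inK_one, inK_zero, inK_zero, inK_zero⟩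
lemma Kco_e₂ : Kco e₂ := ⟨inK_zero, inK_one, inK_zero, inK_zero⟩
lemma Kco_e₃ : Kco e₃ := ⟨inK_div2 inK_one, inK_div2 inK_one, inK_div2 inK_one, inK_div2 inK_one⟩
lemma Kco_e₄ : Kco e₄ :=
  ⟨inK_div2 (inK_sub inK_one inK_gold), inK_div2 inK_gold, inK_zero, inK_div2 inK_one⟩

lemma Kco_smul {c : ℝ} {q : ℍ[ℝ]} (hc : inK c) (hq : Kco q) : Kco (c • q) := by
  obtain ⟨h1, h2, h3, h4⟩ := hq
  exact ⟨by simpa using inK_mul hc h1, by simpa using inK_mul hc h2,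
    by simpa using inK_mul hc h3, by simpa using inK_mul hc h4⟩

lemma Kco_add {p q : ℍ[ℝ]} (hp : Kco p) (hq : Kco q) : Kco (p + q) := by
  obtain ⟨h1, h2, h3, h4⟩ := hp
  obtain ⟨k1, k2, k3, k4⟩ := hq
  exact ⟨by simpa using inK_add h1 k1, by simpa using inK_add h2 k2,
    by simpa using inK_add h3 k3, by simpa using inK_add h4 k4⟩

lemma twist_inI {q : ℍ[ℝ]} (hq : inI q) : inI (twist q) := by
  obtain ⟨c1, c2, c3, c4, h1, h2, h3, h4, rfl⟩ := hq
  have k1 := inO_inK h1; have k2 := inO_inK h2; have k3 := inO_inK h3; have k4 := inO_inK h4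
  rw [twist_add (Kco_add (Kco_add (Kco_smul k1 Kco_e₁) (Kco_smul k2 Kco_e₂)) (Kco_smul k3 Kco_e₃))
        (Kco_smul k4 Kco_e₄),
      twist_add (Kco_add (Kco_smul k1 Kco_e₁) (Kco_smul k2 Kco_e₂)) (Kco_smul k3 Kco_e₃),
      twist_add (Kco_smul k1 Kco_e₁) (Kco_smul k2 Kco_e₂),
      twist_smul k1 Kco_e₁, twist_smul k2 Kco_e₂, twist_smul k3 Kco_e₃, twist_smul k4 Kco_e₄,
      twist_e₁, twist_e₂, twist_e₃, twist_e₄]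
  refine ⟨conjK c1, conjK c2, conjK c3 + conjK c4, -(conjK c4),
    conjK_inO h1, conjK_inO h2, inO_add (conjK_inO h3) (conjK_inO h4), inO_neg (conjK_inO h4), ?_⟩
  simp only [smul_sub, add_smul, neg_smul]
  abel

/- ---------- the reduced norm ---------- -/

lemma nr_eq' (q : ℍ[ℝ]) : nr q = q.re*q.re + q.imI*q.imI + q.imJ*q.imJ + q.imK*q.imK := by
  simp only [nr, re_mul', Quaternion.re_star, Quaternion.imI_star,
    Quaternion.imJ_star, Quaternion.imK_star]
  ring

lemma nr_mk (a b c d : ℝ) : nr ⟨a,b,c,d⟩ = a*a + b*b + c*c + d*d := by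
  exact nr_eq' _

lemma nr_combo (c1 c2 c3 c4 : ℝ) :
    nr (c1 • e₁ + c2 • e₂ + c3 • e₃ + c4 • e₄) =
      c1*c1 + c2*c2 + c3*c3 + c4*c4 + c1*c3 + (1-gold)*(c1*c4) + c2*c3 + gold*(c2*c4) + c3*c4 := by
  rw [combo_eq, nr_mk]
  linear_combination (c4*c4/2) * goldSq

lemma inO_nr {q : ℍ[ℝ]} (hq : inI q) : inO (nr q) := by
  obtain ⟨c1, c2, c3, c4, h1, h2, h3, h4, rfl⟩ := hq
  rw [nr_combo]
  exact inO_add (inO_add (inO_add (inO_add (inO_add (inO_add (inO_add (inO_add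
    (inO_mul h1 h1) (inO_mul h2 h2)) (inO_mul h3 h3)) (inO_mul h4 h4)) (inO_mul h1 h3))
    (inO_mul (inO_sub inO_one inO_gold) (inO_mul h1 h4))) (inO_mul h2 h3))
    (inO_mul inO_gold (inO_mul h2 h4))) (inO_mul h3 h4)

lemma nr_eq_normSq (q : ℍ[ℝ]) : nr q = normSq q := by
  rw [nr, Quaternion.self_mul_star, Quaternion.re_coe]

lemma nr_mul (p q : ℍ[ℝ]) : nr (p * q) = nr p * nr q := by
  simp only [nr_eq_normSq, map_mul]

lemma nr_one : nr 1 = 1 := by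
  rw [nr_eq_normSq]; simp

lemma nr_ne_zero {q : ℍ[ℝ]} (hq : q ≠ 0) : nr q ≠ 0 := by
  rw [nr_eq_normSq]
  exact_mod_cast Quaternion.normSq_ne_zero.mpr hq

/- ---------- the lattice L ---------- -/

lemma zsmul_real (n : ℤ) (x : ℍ[ℝ]) : n • x = ((n : ℝ)) • x :=
  (Int.cast_smul_eq_zsmul ℝ n x).symm

lemma mem_Lgrp_iff {x : ℍ[ℝ]} :
    x ∈ Lgrp ↔ ∃ a b c d : ℤ, x = a • g₁ + b • g₂ + c • g₃ + d • g₄ := by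
  constructor
  · intro h
    refine AddSubgroup.closure_induction ?_ ?_ ?_ ?_ h
    · intro x hx
      have hx' : x = g₁ ∨ x = g₂ ∨ x = g₃ ∨ x = g₄ := by simpa using hx
      rcases hx' with rfl | rfl | rfl | rfl
      · exact ⟨1, 0, 0, 0, by simp⟩
      · exact ⟨0, 1, 0, 0, by simp⟩
      · exact ⟨0, 0, 1, 0, by simp⟩
      · exact ⟨0, 0, 0, 1, by simp⟩
    · exact ⟨0, 0, 0, 0, by simp⟩
    · rintro x y _ _ ⟨a, b, c, d, rfl⟩ ⟨a', b', c', d', rfl⟩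
      refine ⟨a + a', b + b', c + c', d + d', ?_⟩
      simp only [add_zsmul]
      abel
    · rintro x _ ⟨a, b, c, d, rfl⟩
      refine ⟨-a, -b, -c, -d, ?_⟩
      simp only [neg_zsmul]
      abel
  · rintro ⟨a, b, c, d, rfl⟩
    have m1 : g₁ ∈ Lgrp := AddSubgroup.subset_closure (by simp)
    have m2 : g₂ ∈ Lgrp := AddSubgroup.subset_closure (by simp)
    have m3 : g₃ ∈ Lgrp := AddSubgroup.subset_closure (by simp)
    have m4 : g₄ ∈ Lgrp := AddSubgroup.subset_closure (by simp)
    exact AddSubgroup.add_mem _ (AddSubgroup.add_mem _ (AddSubgroup.add_mem _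
      (AddSubgroup.zsmul_mem _ m1 a) (AddSubgroup.zsmul_mem _ m2 b))
      (AddSubgroup.zsmul_mem _ m3 c)) (AddSubgroup.zsmul_mem _ m4 d)

lemma inI_g₁ : inI (g₁) := by
  refine ⟨(1 + (0)*gold : ℝ), (0 + (0)*gold : ℝ), (0 + (0)*gold : ℝ), (0 + (0)*gold : ℝ), ⟨1, 0, by push_cast; ring⟩, ⟨0, 0, by push_cast; ring⟩, ⟨0, 0, by push_cast; ring⟩, ⟨0, 0, by push_cast; ring⟩, ?_⟩
  rw [combo_eq]
  ext
  · simp only [re_mul', g₁, mk_re', mk_imI', mk_imJ', mk_imK']; linear_combination (0 : ℝ) * goldSq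
  · simp only [imI_mul', g₁, mk_re', mk_imI', mk_imJ', mk_imK']; linear_combination (0 : ℝ) * goldSq
  · simp only [imJ_mul', g₁, mk_re', mk_imI', mk_imJ', mk_imK']; linear_combination (0 : ℝ) * goldSq
  · simp only [imK_mul', g₁, mk_re', mk_imI', mk_imJ', mk_imK']; linear_combination (0 : ℝ) * goldSq

lemma inI_g₂ : inI (g₂) := by
  refine ⟨(-1 + (0)*gold : ℝ), (0 + (0)*gold : ℝ), (1 + (0)*gold : ℝ), (0 + (0)*gold : ℝ), ⟨-1, 0, by push_cast; ring⟩, ⟨0, 0, by push_cast; ring⟩, ⟨1, 0, by push_cast; ring⟩, ⟨0, 0, by push_cast; ring⟩, ?_⟩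
  rw [combo_eq]
  ext
  · simp only [re_mul', g₂, mk_re', mk_imI', mk_imJ', mk_imK']; linear_combination (0 : ℝ) * goldSq
  · simp only [imI_mul', g₂, mk_re', mk_imI', mk_imJ', mk_imK']; linear_combination (0 : ℝ) * goldSq
  · simp only [imJ_mul', g₂, mk_re', mk_imI', mk_imJ', mk_imK']; linear_combination (0 : ℝ) * goldSq
  · simp only [imK_mul', g₂, mk_re', mk_imI', mk_imJ', mk_imK']; linear_combination (0 : ℝ) * goldSq

lemma inI_g₃ : inI (g₃) := by
  refine ⟨(0 + (0)*gold : ℝ), (-1 + (0)*gold : ℝ), (0 + (0)*gold : ℝ), (0 + (0)*gold : ℝ), ⟨0, 0, by push_cast; ring⟩, ⟨-1, 0, by push_cast; ring⟩, ⟨0, 0, by push_cast; ring⟩, ⟨0, 0, by push_cast; ring⟩, ?_⟩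
  rw [combo_eq]
  ext
  · simp only [re_mul', g₃, mk_re', mk_imI', mk_imJ', mk_imK']; linear_combination (0 : ℝ) * goldSq
  · simp only [imI_mul', g₃, mk_re', mk_imI', mk_imJ', mk_imK']; linear_combination (0 : ℝ) * goldSq
  · simp only [imJ_mul', g₃, mk_re', mk_imI', mk_imJ', mk_imK']; linear_combination (0 : ℝ) * goldSq
  · simp only [imK_mul', g₃, mk_re', mk_imI', mk_imJ', mk_imK']; linear_combination (0 : ℝ) * goldSq

lemma inI_g₄ : inI (g₄) := by
  refine ⟨(-1 + (0)*gold : ℝ), (2 + (0)*gold : ℝ), (-1 + (1)*gold : ℝ), (1 + (-2)*gold : ℝ), ⟨-1, 0, by push_cast; ring⟩, ⟨2, 0, by push_cast; ring⟩, ⟨-1, 1, by push_cast; ring⟩, ⟨1, -2, by push_cast; ring⟩, ?_⟩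
  rw [combo_eq]
  ext
  · simp only [re_mul', g₄, mk_re', mk_imI', mk_imJ', mk_imK']; linear_combination (-1 : ℝ) * goldSq
  · simp only [imI_mul', g₄, mk_re', mk_imI', mk_imJ', mk_imK']; linear_combination (1 : ℝ) * goldSq
  · simp only [imJ_mul', g₄, mk_re', mk_imI', mk_imJ', mk_imK']; linear_combination (0 : ℝ) * goldSq
  · simp only [imK_mul', g₄, mk_re', mk_imI', mk_imJ', mk_imK']; linear_combination (0 : ℝ) * goldSq


lemma conjK_m_gold_half : conjK (-gold/2) = (gold - 1)/2 := by
  have h : -gold/2 = ((-1/4 : ℚ) : ℝ) + ((-1/4 : ℚ) : ℝ) * sqrt5 := by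
    rw [gold_eq]; push_cast; ring
  rw [h, conjK_spec]
  rw [gold_eq]; push_cast; ring

lemma conjK_gold_m1_half : conjK ((gold - 1)/2) = -gold/2 := by
  have h : (gold - 1)/2 = ((-1/4 : ℚ) : ℝ) + ((1/4 : ℚ) : ℝ) * sqrt5 := by
    rw [gold_eq]; push_cast; ring
  rw [h, conjK_spec]
  rw [gold_eq]; push_cast; ring

lemma twist_g₁ : twist g₁ = g₁ := by
  ext <;> simp only [twist_re', twist_imI', twist_imJ', twist_imK',
    Quaternion.re_sub, Quaternion.imI_sub, Quaternion.imJ_sub, Quaternion.imK_sub] <;> simp only [g₁, 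
    mk_re', mk_imI', mk_imJ', mk_imK', conjK_one, conjK_zero]

lemma twist_g₂ : twist g₂ = g₂ := by
  have hm : conjK (-1/2 : ℝ) = -1/2 := by
    have : ((-1/2 : ℚ) : ℝ) = (-1/2 : ℝ) := by norm_num
    rw [← this, conjK_rat]
  ext <;> simp only [twist_re', twist_imI', twist_imJ', twist_imK',
    Quaternion.re_sub, Quaternion.imI_sub, Quaternion.imJ_sub, Quaternion.imK_sub] <;> simp only [g₂, 
    mk_re', mk_imI', mk_imJ', mk_imK', conjK_half, hm]

lemma twist_g₃ : twist g₃ = g₃ := by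
  have hm : conjK (-1 : ℝ) = -1 := by
    have : ((-1 : ℚ) : ℝ) = (-1 : ℝ) := by norm_num
    rw [← this, conjK_rat]
  ext <;> simp only [twist_re', twist_imI', twist_imJ', twist_imK',
    Quaternion.re_sub, Quaternion.imI_sub, Quaternion.imJ_sub, Quaternion.imK_sub] <;> simp only [g₃, 
    mk_re', mk_imI', mk_imJ', mk_imK', conjK_zero, hm]

lemma twist_g₄ : twist g₄ = g₄ := by
  ext <;> simp only [twist_re', twist_imI', twist_imJ', twist_imK',
    Quaternion.re_sub, Quaternion.imI_sub, Quaternion.imJ_sub, Quaternion.imK_sub] <;> simp only [g₄, 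
    mk_re', mk_imI', mk_imJ', mk_imK', conjK_zero, conjK_half,
    conjK_m_gold_half, conjK_gold_m1_half]

lemma twist_neg {q : ℍ[ℝ]} (hq : Kco q) : twist (-q) = -twist q := by
  obtain ⟨h1, h2, h3, h4⟩ := hq
  ext <;> simp only [twist_re', twist_imI', twist_imJ', twist_imK',
    Quaternion.re_neg, Quaternion.imI_neg, Quaternion.imJ_neg, Quaternion.imK_neg,
    conjK_neg, h1, h2, h3, h4]

lemma twist_zero : twist 0 = 0 := by
  ext <;> simp only [twist_re', twist_imI', twist_imJ', twist_imK',
    Quaternion.re_zero, Quaternion.imI_zero, Quaternion.imJ_zero, Quaternion.imK_zero,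
    conjK_zero]

lemma Lgrp_inI_fix {x : ℍ[ℝ]} (hx : x ∈ Lgrp) : inI x ∧ twist x = x := by
  refine AddSubgroup.closure_induction ?_ ?_ ?_ ?_ hx
  · intro y hy
    have hy' : y = g₁ ∨ y = g₂ ∨ y = g₃ ∨ y = g₄ := by simpa using hy
    rcases hy' with rfl | rfl | rfl | rfl
    · exact ⟨inI_g₁, twist_g₁⟩
    · exact ⟨inI_g₂, twist_g₂⟩
    · exact ⟨inI_g₃, twist_g₃⟩
    · exact ⟨inI_g₄, twist_g₄⟩
  · exact ⟨inI_zero, twist_zero⟩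
  · rintro y z _ _ ⟨hyI, hyT⟩ ⟨hzI, hzT⟩
    exact ⟨inI_add hyI hzI, by rw [twist_add (Kco_inI hyI) (Kco_inI hzI), hyT, hzT]⟩
  · rintro y _ ⟨hyI, hyT⟩
    exact ⟨inI_neg hyI, by rw [twist_neg (Kco_inI hyI), hyT]⟩

lemma L_of_fix {q : ℍ[ℝ]} (hq : inI q) (ht : twist q = q) : q ∈ Lgrp := by
  obtain ⟨c1, c2, c3, c4, h1, h2, h3, h4, rfl⟩ := hq
  obtain ⟨m1, n1, rfl⟩ := h1
  obtain ⟨m2, n2, rfl⟩ := h2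
  obtain ⟨m3, n3, rfl⟩ := h3
  obtain ⟨m4, n4, rfl⟩ := h4
  rw [Quaternion.ext_iff] at ht
  obtain ⟨hA, hB, hJ, hK⟩ := ht
  simp only [twist_re', twist_imI', twist_imJ', twist_imK'] at hA hB hJ hK
  rw [combo_eq] at hA hB hJ hK
  simp only [twist_re', twist_imI', twist_imJ', twist_imK',
    mk_re', mk_imI', mk_imJ', mk_imK'] at hA hB hJ hK
  -- rewrite components in the canonical ℚ(√5)-form
  have eA : ((m1 : ℝ) + (n1 : ℝ) * gold) + ((m3 : ℝ) + (n3 : ℝ) * gold)/2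
        + ((m4 : ℝ) + (n4 : ℝ) * gold)*(1-gold)/2
      = ((m1 + m3/2 + m4/4 + n1/2 + n3/4 - n4/2 : ℚ) : ℝ)
        + ((-m4/4 + n1/2 + n3/4 : ℚ) : ℝ) * sqrt5 := by
    rw [gold_eq]; push_cast; linear_combination (-(n4 : ℝ)/8) * sqrt5_sq
  have eB : ((m2 : ℝ) + (n2 : ℝ) * gold) + ((m3 : ℝ) + (n3 : ℝ) * gold)/2
        + ((m4 : ℝ) + (n4 : ℝ) * gold)*gold/2
      = ((m2 + m3/2 + m4/4 + n2/2 + n3/4 + 3*n4/4 : ℚ) : ℝ)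
        + ((m4/4 + n2/2 + n3/4 + n4/4 : ℚ) : ℝ) * sqrt5 := by
    rw [gold_eq]; push_cast; linear_combination ((n4 : ℝ)/8) * sqrt5_sq
  have eC : ((m3 : ℝ) + (n3 : ℝ) * gold)/2
      = ((m3/2 + n3/4 : ℚ) : ℝ) + ((n3/4 : ℚ) : ℝ) * sqrt5 := by
    rw [gold_eq]; push_cast; ring
  have eD : ((m3 : ℝ) + (n3 : ℝ) * gold)/2 + ((m4 : ℝ) + (n4 : ℝ) * gold)/2
      = ((m3/2 + m4/2 + n3/4 + n4/4 : ℚ) : ℝ) + ((n3/4 + n4/4 : ℚ) : ℝ) * sqrt5 := by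
    rw [gold_eq]; push_cast; ring
  rw [eA, conjK_spec] at hA
  rw [eB, conjK_spec] at hB
  rw [eD, eC, conjK_spec] at hJ
  -- extract the rational relations
  have hA' : ((m1 + m3/2 + m4/4 + n1/2 + n3/4 - n4/2 : ℚ) : ℝ)
      + ((-(-m4/4 + n1/2 + n3/4) : ℚ) : ℝ) * sqrt5
      = ((m1 + m3/2 + m4/4 + n1/2 + n3/4 - n4/2 : ℚ) : ℝ)
      + ((-m4/4 + n1/2 + n3/4 : ℚ) : ℝ) * sqrt5 := by push_cast at hA ⊢; linarith
  have hB' : ((m2 + m3/2 + m4/4 + n2/2 + n3/4 + 3*n4/4 : ℚ) : ℝ)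
      + ((-(m4/4 + n2/2 + n3/4 + n4/4) : ℚ) : ℝ) * sqrt5
      = ((m2 + m3/2 + m4/4 + n2/2 + n3/4 + 3*n4/4 : ℚ) : ℝ)
      + ((m4/4 + n2/2 + n3/4 + n4/4 : ℚ) : ℝ) * sqrt5 := by push_cast at hB ⊢; linarith
  have hJ' : ((m3/2 + m4/2 + n3/4 + n4/4 : ℚ) : ℝ)
      + ((-(n3/4 + n4/4) : ℚ) : ℝ) * sqrt5
      = ((m3/2 + n3/4 : ℚ) : ℝ) + ((n3/4 : ℚ) : ℝ) * sqrt5 := by push_cast at hJ ⊢; linarith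
  have r1 : (-m4/4 + n1/2 + n3/4 : ℚ) = 0 := by
    have := (rat_sqrt5_inj hA').2; linarith
  have r2 : (m4/4 + n2/2 + n3/4 + n4/4 : ℚ) = 0 := by
    have := (rat_sqrt5_inj hB').2; linarith
  have r3 : (m3/2 + m4/2 + n3/4 + n4/4 : ℚ) = (m3/2 + n3/4 : ℚ) := (rat_sqrt5_inj hJ').1
  have r4 : (-(n3/4 + n4/4) : ℚ) = (n3/4 : ℚ) := (rat_sqrt5_inj hJ').2
  -- integer relations
  have z1 : -m4 + 2*n1 + n3 = 0 := by
    have : ((-m4 + 2*n1 + n3 : ℤ) : ℚ) = 0 := by push_cast; linarith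
    exact_mod_cast this
  have z2 : m4 + 2*n2 + n3 + n4 = 0 := by
    have : ((m4 + 2*n2 + n3 + n4 : ℤ) : ℚ) = 0 := by push_cast; linarith
    exact_mod_cast this
  have z3 : 2*m4 + n4 = 0 := by
    have : ((2*m4 + n4 : ℤ) : ℚ) = 0 := by push_cast; linarith
    exact_mod_cast this
  have z4 : 2*n3 + n4 = 0 := by
    have : ((2*n3 + n4 : ℤ) : ℚ) = 0 := by push_cast; linarith
    exact_mod_cast this
  have hn4 : n4 = -2*m4 := by omega
  have hn3 : n3 = 1*m4 := by omega
  have hn1 : n1 = 0 := by omega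
  have hn2 : n2 = 0 := by omega
  subst hn4; subst hn3; subst hn1; subst hn2
  rw [mem_Lgrp_iff]
  refine ⟨m1 + m3 + 2*m4, m3 + m4, 2*m4 - m2, m4, ?_⟩
  simp only [zsmul_real]
  rw [combo_eq]
  ext <;>
    simp only [Quaternion.re_add, Quaternion.imI_add, Quaternion.imJ_add,
      Quaternion.imK_add, Quaternion.re_smul, Quaternion.imI_smul, Quaternion.imJ_smul,
      Quaternion.imK_smul, smul_eq_mul] <;> simp only [g₁, g₂, g₃, g₄, mk_re', mk_imI', mk_imJ', mk_imK'] <;>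
    push_cast
  · linear_combination ((m4 : ℝ)) * goldSq
  · linear_combination (-(m4 : ℝ)) * goldSq
  · ring
  · ring

lemma conjLgrp {u x : ℍ[ℝ]} (hu : inI u) (hx : x ∈ Lgrp) : u * x * twist u ∈ Lgrp := by
  obtain ⟨hxI, hxT⟩ := Lgrp_inI_fix hx
  have h1 : inI (u * x * twist u) := inI_mul (inI_mul hu hxI) (twist_inI hu)
  have h2 : twist (u * x * twist u) = u * x * twist u := by
    rw [twist_mul (Kco_inI (inI_mul hu hxI)) (Kco_inI (twist_inI hu)),
      twist_mul (Kco_inI hu) (Kco_inI hxI), twist_twist (Kco_inI hu), hxT, mul_assoc]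
  exact L_of_fix h1 h2

lemma rotHom_apply (q : ℍ[ℝ]) (c : ℝ) (x : ℍ[ℝ]) :
    rotHom q c x = c • (q * x * twist q) := rfl

lemma map_rot_eq {s u v : ℍ[ℝ]} (hs : Kco s) (hu : inI u) (hv : inI v)
    (huv : u * v = 1) (c : ℝ) :
    Lgrp.map (rotHom (s * u) c) = Lgrp.map (rotHom s c) := by
  have hKu := Kco_inI hu
  have hKv := Kco_inI hv
  have htsu : twist (s * u) = twist u * twist s := twist_mul hs hKu
  apply le_antisymm
  · rintro x hx
    rw [AddSubgroup.mem_map] at hx ⊢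
    obtain ⟨y, hy, rfl⟩ := hx
    refine ⟨u * y * twist u, conjLgrp hu hy, ?_⟩
    rw [rotHom_apply, rotHom_apply, htsu]
    congr 1
    simp only [mul_assoc]
  · rintro x hx
    rw [AddSubgroup.mem_map] at hx ⊢
    obtain ⟨y, hy, rfl⟩ := hx
    refine ⟨v * y * twist v, conjLgrp hv hy, ?_⟩
    rw [rotHom_apply, rotHom_apply, htsu]
    have hvu' : twist v * twist u = 1 := by
      rw [← twist_mul hKu hKv, huv, twist_one]
    congr 1
    rw [show s * u * (v * y * twist v) * (twist u * twist s)
        = s * ((u * v) * (y * ((twist v * twist u) * twist s))) by simp only [mul_assoc],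
      huv, hvu', one_mul, one_mul, ← mul_assoc]

theorem csl_eq_of_eq_right_ideal (r s : ℍ[ℝ]) (m k : ℕ)
    (hr : PrimitiveIcosian r) (hs : PrimitiveIcosian s)
    (hrm : Admissible r m) (hsk : Admissible s k)
    (hideal : {y : ℍ[ℝ] | ∃ x : ℍ[ℝ], inI x ∧ y = r * x} =
      {y : ℍ[ℝ] | ∃ x : ℍ[ℝ], inI x ∧ y = s * x}) :
    m = k ∧
    Lgrp ⊓ Lgrp.map (rotHom r ((m : ℝ))⁻¹) = Lgrp ⊓ Lgrp.map (rotHom s ((k : ℝ))⁻¹) := by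
  obtain ⟨hrI, -⟩ := hr
  obtain ⟨hsI, -⟩ := hs
  have hrm' : nr r * conjK (nr r) = ((m : ℝ)) ^ 2 := hrm
  have hsk' : nr s * conjK (nr s) = ((k : ℝ)) ^ 2 := hsk
  have hrmem : r ∈ {y : ℍ[ℝ] | ∃ x : ℍ[ℝ], inI x ∧ y = s * x} := by
    rw [← hideal]
    exact ⟨1, inI_one, (mul_one r).symm⟩
  obtain ⟨u, huI, hru⟩ := hrmem
  have hsmem : s ∈ {y : ℍ[ℝ] | ∃ x : ℍ[ℝ], inI x ∧ y = r * x} := by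
    rw [hideal]
    exact ⟨1, inI_one, (mul_one s).symm⟩
  obtain ⟨v, hvI, hsv⟩ := hsmem
  by_cases hr0 : r = 0
  · -- degenerate case r = 0
    have hs0 : s = 0 := by rw [hsv, hr0, zero_mul]
    have hnr0 : nr r = 0 := by rw [hr0, nr_eq_normSq]; simp
    have hm : m = 0 := by
      have h0 : ((m : ℝ)) ^ 2 = 0 := by rw [← hrm', hnr0, zero_mul]
      have : (m : ℝ) = 0 := by
        have := pow_eq_zero_iff (n := 2) (by norm_num) |>.mp h0
        exact this
      exact_mod_cast this
    have hnrs0 : nr s = 0 := by rw [hs0, nr_eq_normSq]; simp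
    have hk : k = 0 := by
      have h0 : ((k : ℝ)) ^ 2 = 0 := by rw [← hsk', hnrs0, zero_mul]
      have : (k : ℝ) = 0 := by
        have := pow_eq_zero_iff (n := 2) (by norm_num) |>.mp h0
        exact this
      exact_mod_cast this
    subst hm; subst hk
    refine ⟨rfl, ?_⟩
    rw [hr0, hs0]
  · -- main case r ≠ 0
    have hs0 : s ≠ 0 := fun h => hr0 (by rw [hru, h, zero_mul])
    have hvu : v * u = 1 := by
      apply mul_left_cancel₀ hr0
      rw [mul_one, ← mul_assoc, ← hsv, ← hru]
    have hu0 : u ≠ 0 := by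
      rintro rfl
      rw [mul_zero] at hvu
      exact one_ne_zero hvu.symm
    have huv : u * v = 1 := by
      have hv : v = u⁻¹ := eq_inv_of_mul_eq_one_left hvu
      rw [hv, mul_inv_cancel₀ hu0]
    -- norm bookkeeping
    have hKs : inK (nr s) := inO_inK (inO_nr hsI)
    have hKu : inK (nr u) := inO_inK (inO_nr huI)
    have hKv : inK (nr v) := inO_inK (inO_nr hvI)
    obtain ⟨Nu, hNu⟩ := norm_int (inO_nr huI)
    obtain ⟨Nv, hNv⟩ := norm_int (inO_nr hvI)
    have h1 : nr u * nr v = 1 := by rw [← nr_mul, huv, nr_one]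
    have h2 : conjK (nr u) * conjK (nr v) = 1 := by
      rw [← conjK_mul hKu hKv, h1, conjK_one]
    have hNuNv : (Nu : ℝ) * (Nv : ℝ) = 1 := by
      rw [← hNu, ← hNv]
      linear_combination (conjK (nr u) * conjK (nr v)) * h1 + h2
    have hm2 : ((m : ℝ)) ^ 2 = ((k : ℝ)) ^ 2 * (Nu : ℝ) := by
      rw [← hrm', hru, nr_mul, conjK_mul hKs hKu]
      linear_combination (nr u * conjK (nr u)) * hsk' + ((k : ℝ) ^ 2) * hNu
    -- positivity
    have hcs_ne : conjK (nr s) ≠ 0 := fun h =>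
      (nr_ne_zero hs0) (conjK_eq_zero hKs h)
    have hk0 : (k : ℝ) ≠ 0 := by
      intro h
      rw [h] at hsk'
      have h0 : nr s * conjK (nr s) = 0 := by rw [hsk']; norm_num
      rcases mul_eq_zero.mp h0 with h' | h'
      · exact (nr_ne_zero hs0) h'
      · exact hcs_ne h'
    have hk2_pos : (0 : ℝ) < ((k : ℝ)) ^ 2 := by
      have := hk0
      positivity
    have hm0 : (m : ℝ) ≠ 0 := by
      intro h
      rw [h] at hm2
      have hNu0 : (Nu : ℝ) = 0 := by
        have h0 : ((k : ℝ)) ^ 2 * (Nu : ℝ) = 0 := by rw [← hm2]; norm_num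
        rcases mul_eq_zero.mp h0 with h' | h'
        · exact absurd h' (pow_ne_zero 2 hk0)
        · exact h'
      rw [hNu0, zero_mul] at hNuNv
      exact one_ne_zero hNuNv.symm
    have hm2_pos : (0 : ℝ) < ((m : ℝ)) ^ 2 := by
      have := hm0
      positivity
    have hNu_pos : (0 : ℝ) < (Nu : ℝ) := by nlinarith
    have hNuZ : Nu * Nv = 1 := by exact_mod_cast hNuNv
    have hNu1 : Nu = 1 := by
      have h01 : (0 : ℤ) < Nu := by exact_mod_cast hNu_pos
      have h2' := Int.isUnit_iff.mp (IsUnit.of_mul_eq_one _ hNuZ)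
      omega
    have hmk : m = k := by
      have hNu1' : (Nu : ℝ) = 1 := by exact_mod_cast hNu1
      rw [hNu1', mul_one] at hm2
      have hn : m ^ 2 = k ^ 2 := by exact_mod_cast hm2
      exact Nat.pow_left_injective (by norm_num) hn
    refine ⟨hmk, ?_⟩
    subst hmk
    rw [hru]
    exact congrArg (Lgrp ⊓ ·) (map_rot_eq (Kco_inI hsI) huI hvI huv _)


end
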